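/- The set F_1 has exactly 2q_0^3 elements. -/

import Mathlib

/-- `q₀ = 2^s`. -/
def q0 (s : ℕ) : ℕ := 2 ^ s

/-- `q = 2 q₀²`. -/
def qS (s : ℕ) : ℕ := 2 * q0 s ^ 2

/-- `m_{j,k,ℓ} = ⌈(q₀/(q₀−1))·(j + k + ℓ − (k+ℓ)/q)⌉`. -/
def mval (s j k l : ℕ) : ℤ :=
  ⌈((q0 s : ℚ) / ((q0 s : ℚ) - 1)) *
    ((j : ℚ) + (k : ℚ) + (l : ℚ) - ((k : ℚ) + (l : ℚ)) / (qS s : ℚ))⌉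

/-- `F₁ = { hq − (ℓ+2k)q₀ − j : ℓ ∈ {0,1}, k,j ∈ {0,…,q₀−1},
    h ∈ {max{1, m_{j,k,ℓ}},…,2q₀} }`. -/
def F1 (s : ℕ) : Set ℕ :=
  {n | ∃ h j k l : ℕ, l ≤ 1 ∧ k < q0 s ∧ j < q0 s ∧
    max 1 (mval s j k l) ≤ (h : ℤ) ∧ h ≤ 2 * q0 s ∧
    n = h * qS s - (l + 2 * k) * q0 s - j}

/-- `F₂ = { hq − (2h−2q₀−1)q₀ − (q₀−1) : h ∈ {q₀+1,…,2q₀} }`. -/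
def F2 (s : ℕ) : Set ℕ :=
  {n | ∃ h : ℕ, q0 s + 1 ≤ h ∧ h ≤ 2 * q0 s ∧
    n = h * qS s - (2 * h - 2 * q0 s - 1) * q0 s - (q0 s - 1)}

/-- `G₁ = { hq − kq₀ − ⌊(2h−k−2)/2⌋ : h ∈ {1,…,q₀}, k ∈ {0,…,2h−2} }`. -/
def G1 (s : ℕ) : Set ℕ :=
  {n | ∃ h k : ℕ, 1 ≤ h ∧ h ≤ q0 s ∧ k ≤ 2 * h - 2 ∧
    n = h * qS s - k * q0 s - (2 * h - k - 2) / 2}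

open Finset

lemma hQ2 (s : ℕ) (hs : 1 ≤ s) : 2 ≤ q0 s := by
  calc 2 = 2^1 := rfl
  _ ≤ 2^s := Nat.pow_le_pow_right (by norm_num) hs
  _ = q0 s := rfl

lemma div_bounds (Q t : ℕ) (hQ : 2 ≤ Q) :
    t ≤ ((t + Q - 2) / (Q - 1)) * (Q - 1) ∧
    ((t + Q - 2) / (Q - 1)) * (Q - 1) ≤ t + Q - 2 := by
  have hd := Nat.div_add_mod (t + Q - 2) (Q - 1)
  have hm : (t + Q - 2) % (Q - 1) < Q - 1 := Nat.mod_lt _ (by omega)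
  rw [mul_comm ((t + Q - 2) / (Q - 1))]
  generalize hx : (Q - 1) * ((t + Q - 2) / (Q - 1)) = x at hd ⊢
  omega

/-- nat version of mval -/
def Mnat (s j k l : ℕ) : ℕ :=
  (j + k + l) + ((j + k + l) + q0 s - 2) / (q0 s - 1)

lemma mval_eq (s j k l : ℕ) (hs : 1 ≤ s) (hk : k < q0 s) (hl : l ≤ 1) :
    mval s j k l = (Mnat s j k l : ℤ) := by
  have hQ := hQ2 s hs
  have hQ1 : 1 ≤ q0 s := by omega
  obtain ⟨hb1, hb2⟩ := div_bounds (q0 s) (j + k + l) hQ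
  set n : ℕ := ((j + k + l) + q0 s - 2) / (q0 s - 1) with hn
  have hM : Mnat s j k l = j + k + l + n := by rw [Mnat]
  have hb1q : ((j:ℚ) + k + l) ≤ (n:ℚ) * ((q0 s : ℚ) - 1) := by
    have h : ((j + k + l : ℕ) : ℚ) ≤ ((n * (q0 s - 1) : ℕ) : ℚ) := Nat.cast_le.mpr hb1
    push_cast [Nat.cast_sub hQ1] at h
    convert h using 1
  have hb2q : (n:ℚ) * ((q0 s : ℚ) - 1) ≤ (j:ℚ) + k + l + (q0 s : ℚ) - 2 := by
    have h : ((n * (q0 s - 1) : ℕ) : ℚ) ≤ ((j + k + l + q0 s - 2 : ℕ) : ℚ) := Nat.cast_le.mpr hb2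
    push_cast [Nat.cast_sub hQ1, Nat.cast_sub (show 2 ≤ j + k + l + q0 s by omega)] at h
    convert h using 1
  have hklq : (k:ℚ) + l ≤ (q0 s : ℚ) := by
    have : k + l ≤ q0 s := by omega
    exact_mod_cast this
  have hkl0 : (0:ℚ) ≤ (k:ℚ) + l := by positivity
  have hQq : (2:ℚ) ≤ (q0 s : ℚ) := by exact_mod_cast hQ
  have hQm1 : (0:ℚ) < (q0 s : ℚ) - 1 := by linarith
  have hQpos : (0:ℚ) < (q0 s : ℚ) := by linarith
  have hD : (0:ℚ) < 2 * (q0 s : ℚ) * ((q0 s : ℚ) - 1) := by positivity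
  have hqS : (qS s : ℚ) = 2 * (q0 s : ℚ)^2 := by rw [qS]; push_cast; ring
  have key : ((q0 s : ℚ) / ((q0 s : ℚ) - 1)) *
      ((j : ℚ) + (k : ℚ) + (l : ℚ) - ((k : ℚ) + (l : ℚ)) / (qS s : ℚ))
      = (2 * (q0 s : ℚ)^2 * ((j:ℚ) + k + l) - ((k:ℚ) + l)) / (2 * (q0 s : ℚ) * ((q0 s : ℚ) - 1)) := by
    have h1 : ((q0 s : ℚ) - 1) ≠ 0 := ne_of_gt hQm1
    have h2 : (q0 s : ℚ) ≠ 0 := ne_of_gt hQpos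
    rw [hqS]; field_simp
  rw [mval, hM, key, Int.ceil_eq_iff]
  constructor
  · rw [lt_div_iff₀ hD]
    push_cast
    nlinarith [mul_le_mul_of_nonneg_left
      (show (1:ℚ) ≤ (j:ℚ) + k + l - ((n:ℚ) - 1) * ((q0 s : ℚ) - 1) by nlinarith [hb2q])
      (show (0:ℚ) ≤ 2 * (q0 s : ℚ) by linarith)]
  · rw [div_le_iff₀ hD]
    push_cast
    nlinarith [mul_nonneg (show (0:ℚ) ≤ 2 * (q0 s : ℚ) by linarith)
      (show (0:ℚ) ≤ (n:ℚ) * ((q0 s:ℚ) - 1) - ((j:ℚ) + k + l) by linarith)]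

lemma term_eq (s j k l : ℕ) (hs : 1 ≤ s) (hj : j < q0 s) (hk : k < q0 s) (hl : l ≤ 1) :
    (2 * q0 s + 1 - max 1 (Mnat s j k l)) + (if q0 s ≤ j + k + l then 1 else 0)
      + (j + k + l) = 2 * q0 s := by
  have hQ := hQ2 s hs
  rw [Mnat]
  rcases Nat.lt_or_ge (j + k + l) 1 with h0 | h1
  · have hdiv : (j + k + l + q0 s - 2) / (q0 s - 1) = 0 := Nat.div_eq_of_lt (by omega)
    rw [hdiv]; split_ifs <;> omega
  · rcases Nat.lt_or_ge (j + k + l) (q0 s) with h2 | h3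
    · have hdiv : (j + k + l + q0 s - 2) / (q0 s - 1) = 1 :=
        Nat.div_eq_of_lt_le (by omega) (by omega)
      rw [hdiv]; split_ifs <;> omega
    · rcases Nat.lt_or_ge (j + k + l) (2 * q0 s - 1) with h4 | h5
      · have hdiv : (j + k + l + q0 s - 2) / (q0 s - 1) = 2 :=
          Nat.div_eq_of_lt_le (by omega) (by omega)
        rw [hdiv]; split_ifs <;> omega
      · have h6 : j + k + l = 2 * q0 s - 1 := by omega
        have hdiv : (j + k + l + q0 s - 2) / (q0 s - 1) = 3 :=
          Nat.div_eq_of_lt_le (by omega) (by omega)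
        rw [hdiv]; split_ifs <;> omega

lemma int_cancel {d q x y : ℤ} (hq : 0 < q) (hx : 0 ≤ x) (hx' : x < q)
    (hy : 0 ≤ y) (hy' : y < q) (h : d * q = x - y) : d = 0 := by
  rcases lt_trichotomy d 0 with h1 | h1 | h1
  · nlinarith
  · exact h1
  · nlinarith

lemma inj_lem (s : ℕ) (hs : 1 ≤ s) {h j k l h' j' k' l' : ℕ}
    (hh : 1 ≤ h) (hj : j < q0 s) (hk : k < q0 s) (hl : l ≤ 1)
    (hh' : 1 ≤ h') (hj' : j' < q0 s) (hk' : k' < q0 s) (hl' : l' ≤ 1)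
    (he : h * qS s - (l + 2 * k) * q0 s - j = h' * qS s - (l' + 2 * k') * q0 s - j') :
    h = h' ∧ j = j' ∧ k = k' ∧ l = l' := by
  have hQ := hQ2 s hs
  have hqS : qS s = 2 * q0 s ^ 2 := rfl
  have hA : (l + 2 * k) * q0 s + j < qS s := by
    calc (l + 2 * k) * q0 s + j < (l + 2 * k) * q0 s + q0 s := Nat.add_lt_add_left hj _
    _ = (l + 2 * k + 1) * q0 s := by ring
    _ ≤ (2 * q0 s) * q0 s := Nat.mul_le_mul_right _ (by omega)
    _ = qS s := by rw [hqS]; ring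
  have hA' : (l' + 2 * k') * q0 s + j' < qS s := by
    calc (l' + 2 * k') * q0 s + j' < (l' + 2 * k') * q0 s + q0 s := Nat.add_lt_add_left hj' _
    _ = (l' + 2 * k' + 1) * q0 s := by ring
    _ ≤ (2 * q0 s) * q0 s := Nat.mul_le_mul_right _ (by omega)
    _ = qS s := by rw [hqS]; ring
  have hq1 : qS s ≤ h * qS s := Nat.le_mul_of_pos_left _ hh
  have hq1' : qS s ≤ h' * qS s := Nat.le_mul_of_pos_left _ hh'
  have c1 : (l + 2 * k) * q0 s ≤ h * qS s := by omega
  have c2 : j ≤ h * qS s - (l + 2 * k) * q0 s := by omega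
  have c1' : (l' + 2 * k') * q0 s ≤ h' * qS s := by omega
  have c2' : j' ≤ h' * qS s - (l' + 2 * k') * q0 s := by omega
  zify [c1, c2, c1', c2'] at he
  have hEq : ((h:ℤ) - h') * (qS s) =
      (((l + 2 * k) * q0 s + j : ℕ) : ℤ) - (((l' + 2 * k') * q0 s + j' : ℕ) : ℤ) := by
    push_cast
    linear_combination he
  have hqSpos : (0:ℤ) < (qS s : ℤ) := by
    have : 0 < qS s := by rw [hqS]; positivity
    exact_mod_cast this
  have hd0 : (h:ℤ) - h' = 0 :=
    int_cancel hqSpos (by positivity) (by exact_mod_cast hA) (by positivity)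
      (by exact_mod_cast hA') hEq
  have hhh : h = h' := by omega
  subst hhh
  have hr : (l + 2 * k) * q0 s + j = (l' + 2 * k') * q0 s + j' := by
    have : (((l + 2 * k) * q0 s + j : ℕ) : ℤ) = (((l' + 2 * k') * q0 s + j' : ℕ) : ℤ) := by
      rw [hd0, zero_mul] at hEq
      omega
    exact_mod_cast this
  have hQpos : 0 < q0 s := by omega
  have m1 : ((l + 2 * k) * q0 s + j) % q0 s = j := by
    rw [add_comm, Nat.add_mul_mod_self_right, Nat.mod_eq_of_lt hj]
  have m1' : ((l' + 2 * k') * q0 s + j') % q0 s = j' := by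
    rw [add_comm, Nat.add_mul_mod_self_right, Nat.mod_eq_of_lt hj']
  have d1 : ((l + 2 * k) * q0 s + j) / q0 s = l + 2 * k := by
    rw [add_comm, Nat.add_mul_div_right _ _ hQpos, Nat.div_eq_of_lt hj, zero_add]
  have d1' : ((l' + 2 * k') * q0 s + j') / q0 s = l' + 2 * k' := by
    rw [add_comm, Nat.add_mul_div_right _ _ hQpos, Nat.div_eq_of_lt hj', zero_add]
  have e1 : j = j' := by rw [← m1, ← m1', hr]
  have e2 : l + 2 * k = l' + 2 * k' := by rw [← d1, ← d1', hr]
  exact ⟨rfl, e1, by omega, by omega⟩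

/-- the parameter set (j,k,l) -/
def Pfin (s : ℕ) : Finset (ℕ × ℕ × ℕ) :=
  (range (q0 s)) ×ˢ ((range (q0 s)) ×ˢ (range 2))

/-- the h-range -/
def Hfin (s : ℕ) (p : ℕ × ℕ × ℕ) : Finset ℕ :=
  Finset.Icc (max 1 (Mnat s p.1 p.2.1 p.2.2)) (2 * q0 s)

/-- the value map -/
def fv (s h : ℕ) (p : ℕ × ℕ × ℕ) : ℕ :=
  h * qS s - (p.2.2 + 2 * p.2.1) * q0 s - p.1

/-- F1 as a Finset -/
def Tfin (s : ℕ) : Finset ℕ :=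
  (Pfin s).biUnion (fun p => (Hfin s p).image (fun h => fv s h p))

lemma memP {s : ℕ} {p : ℕ × ℕ × ℕ} :
    p ∈ Pfin s ↔ p.1 < q0 s ∧ p.2.1 < q0 s ∧ p.2.2 < 2 := by
  simp [Pfin, Finset.mem_product]

lemma F1_eq (s : ℕ) (hs : 1 ≤ s) : F1 s = ↑(Tfin s) := by
  ext n
  constructor
  · rintro ⟨h, j, k, l, hl, hk, hj, hmax, hh2, rfl⟩
    rw [mval_eq s j k l hs hk hl] at hmax
    have h1 : 1 ≤ h := by
      have := le_trans (le_max_left 1 (Mnat s j k l : ℤ)) hmax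
      exact_mod_cast this
    have h2 : Mnat s j k l ≤ h := by
      have := le_trans (le_max_right 1 (Mnat s j k l : ℤ)) hmax
      exact_mod_cast this
    refine Finset.mem_coe.mpr (Finset.mem_biUnion.mpr ⟨(j, k, l), memP.mpr ⟨hj, hk, show l < 2 by omega⟩, ?_⟩)
    exact Finset.mem_image.mpr ⟨h, Finset.mem_Icc.mpr ⟨max_le h1 h2, hh2⟩, rfl⟩
  · intro hn
    obtain ⟨p, hp, hnn⟩ := Finset.mem_biUnion.mp (Finset.mem_coe.mp hn)
    obtain ⟨h, hh, rfl⟩ := Finset.mem_image.mp hnn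
    obtain ⟨j, k, l⟩ := p
    obtain ⟨hj, hk, hl⟩ := memP.mp hp
    replace hj : j < q0 s := hj
    replace hk : k < q0 s := hk
    replace hl : l < 2 := hl
    rw [Hfin, Finset.mem_Icc] at hh
    refine ⟨h, j, k, l, by omega, hk, hj, ?_, hh.2, rfl⟩
    rw [mval_eq s j k l hs hk (by omega)]
    have h1 : 1 ≤ h := le_trans (le_max_left _ _) hh.1
    have h2 : Mnat s j k l ≤ h := le_trans (le_max_right _ _) hh.1
    exact max_le (by exact_mod_cast h1) (by exact_mod_cast h2)

lemma Tcard (s : ℕ) (hs : 1 ≤ s) :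
    (Tfin s).card = ∑ p ∈ Pfin s, (Hfin s p).card := by
  rw [Tfin, Finset.card_biUnion]
  · refine Finset.sum_congr rfl (fun p hp => ?_)
    obtain ⟨hj, hk, hl⟩ := memP.mp hp
    apply Finset.card_image_of_injOn
    intro a ha b hb hab
    simp only [Hfin, Finset.coe_Icc, Set.mem_Icc] at ha hb
    have ha1 : 1 ≤ a := le_trans (le_max_left _ _) ha.1
    have hb1 : 1 ≤ b := le_trans (le_max_left _ _) hb.1
    exact (inj_lem s hs ha1 hj hk (by omega) hb1 hj hk (by omega) hab).1
  · intro p hp p' hp' hne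
    obtain ⟨hj, hk, hl⟩ := memP.mp hp
    obtain ⟨hj', hk', hl'⟩ := memP.mp hp'
    rw [Function.onFun, Finset.disjoint_left]
    rintro x hx hx'
    obtain ⟨a, ha, rfl⟩ := Finset.mem_image.mp hx
    obtain ⟨b, hb, hab⟩ := Finset.mem_image.mp hx'
    rw [Hfin, Finset.mem_Icc] at ha hb
    have ha1 : 1 ≤ a := le_trans (le_max_left _ _) ha.1
    have hb1 : 1 ≤ b := le_trans (le_max_left _ _) hb.1
    obtain ⟨_, e1, e2, e3⟩ := inj_lem s hs hb1 hj' hk' (by omega) ha1 hj hk (by omega) hab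
    exact hne (by
      obtain ⟨j, k, l⟩ := p
      obtain ⟨j', k', l'⟩ := p'
      simp only at e1 e2 e3
      simp [e1, e2, e3])

lemma gauss (Q : ℕ) (hQ : 1 ≤ Q) : 2 * (∑ i ∈ range Q, i) + Q = Q ^ 2 := by
  obtain ⟨m, rfl⟩ : ∃ m, Q = m + 1 := ⟨Q - 1, by omega⟩
  have h2 := Finset.sum_range_id_mul_two (m + 1)
  simp at h2
  nlinarith [h2]

lemma countA (Q j : ℕ) (hj : j ≤ Q) : (∑ k ∈ range Q, if Q ≤ j + k then 1 else 0) = j := by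
  rw [← Finset.card_filter]
  have : (range Q).filter (fun k => Q ≤ j + k) = Finset.Ico (Q - j) Q := by
    ext x; simp only [mem_filter, mem_range, mem_Ico]; omega
  rw [this, Nat.card_Ico]; omega

lemma countB (Q j : ℕ) (hj : j + 1 ≤ Q) :
    (∑ k ∈ range Q, if Q ≤ j + k + 1 then 1 else 0) = j + 1 := by
  rw [← Finset.card_filter]
  have : (range Q).filter (fun k => Q ≤ j + k + 1) = Finset.Ico (Q - j - 1) Q := by
    ext x; simp only [mem_filter, mem_range, mem_Ico]; omega
  rw [this, Nat.card_Ico]; omega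

lemma sum_ind (Q : ℕ) (hQ : 1 ≤ Q) :
    (∑ p ∈ (range Q) ×ˢ ((range Q) ×ˢ (range 2)),
      (if Q ≤ p.1 + p.2.1 + p.2.2 then 1 else 0)) = Q ^ 2 := by
  rw [Finset.sum_product]
  simp only [Finset.sum_product, Finset.sum_range_succ, Finset.sum_range_zero,
    Finset.sum_add_distrib, zero_add, add_zero]
  rw [Finset.sum_congr rfl (fun j hj => countA Q j (le_of_lt (mem_range.mp hj))),
      Finset.sum_congr rfl (fun j hj => countB Q j (mem_range.mp hj))]
  simp only [Finset.sum_add_distrib, Finset.sum_const, Finset.card_range, smul_eq_mul, mul_one]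
  have := gauss Q hQ
  omega

lemma sum_t (Q : ℕ) (hQ : 1 ≤ Q) :
    (∑ p ∈ (range Q) ×ˢ ((range Q) ×ˢ (range 2)), (p.1 + p.2.1 + p.2.2)) + Q ^ 2
      = 2 * Q ^ 3 := by
  have hG := gauss Q hQ
  rw [Finset.sum_product]
  simp only [Finset.sum_product, Finset.sum_range_succ, Finset.sum_range_zero,
    Finset.sum_add_distrib, Finset.sum_const, Finset.card_range, smul_eq_mul,
    Finset.card_product, zero_add, add_zero, mul_zero, mul_one,
    ← Finset.mul_sum]
  have e1 : ∑ x ∈ range Q, Q * 2 * x = Q * 2 * ∑ x ∈ range Q, x :=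
    (Finset.mul_sum _ _ _).symm
  have e2 : ∑ x ∈ range Q, 2 * x = 2 * ∑ x ∈ range Q, x :=
    (Finset.mul_sum _ _ _).symm
  rw [e1, e2]
  have h2 := congrArg (fun x => 2 * Q * x) hG
  ring_nf
  ring_nf at h2
  linarith [h2]

lemma main_sum (s : ℕ) (hs : 1 ≤ s) :
    ∑ p ∈ Pfin s, (2 * q0 s + 1 - max 1 (Mnat s p.1 p.2.1 p.2.2)) = 2 * q0 s ^ 3 := by
  have hQ := hQ2 s hs
  have hB := sum_ind (q0 s) (by omega)
  have hC := sum_t (q0 s) (by omega)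
  have key : ∀ p ∈ Pfin s,
      (2 * q0 s + 1 - max 1 (Mnat s p.1 p.2.1 p.2.2)) +
        ((if q0 s ≤ p.1 + p.2.1 + p.2.2 then 1 else 0) + (p.1 + p.2.1 + p.2.2))
      = 2 * q0 s := by
    intro p hp
    obtain ⟨hj, hk, hl⟩ := memP.mp hp
    rw [← add_assoc]
    exact term_eq s p.1 p.2.1 p.2.2 hs hj hk (by omega)
  have h1 := Finset.sum_congr rfl key
  rw [Finset.sum_add_distrib, Finset.sum_add_distrib, Finset.sum_const, smul_eq_mul] at h1
  have hcard : (Pfin s).card = q0 s * (q0 s * 2) := by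
    simp [Pfin]
  rw [hcard] at h1
  have hQ3 : q0 s * (q0 s * 2) * (2 * q0 s) = 4 * q0 s ^ 3 := by ring
  rw [hQ3] at h1
  have hB' : (∑ p ∈ Pfin s, (if q0 s ≤ p.1 + p.2.1 + p.2.2 then 1 else 0)) = q0 s ^ 2 := hB
  have hC' : (∑ p ∈ Pfin s, (p.1 + p.2.1 + p.2.2)) + q0 s ^ 2 = 2 * q0 s ^ 3 := hC
  omega

/-- `|F₁| = 2 q₀³`. -/
theorem stmt2 (s : ℕ) (hs : 1 ≤ s) :
    (F1 s).ncard = 2 * q0 s ^ 3 := by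
  rw [F1_eq s hs, Set.ncard_coe_finset, Tcard s hs]
  have : ∀ p ∈ Pfin s, (Hfin s p).card = 2 * q0 s + 1 - max 1 (Mnat s p.1 p.2.1 p.2.2) := by
    intro p _
    rw [Hfin, Nat.card_Icc]
  rw [Finset.sum_congr rfl this, main_sum s hs]
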